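/- Suppose σ ∈ ℂ with σ ≠ 0 and v ∈ ℓ²(ℕ,ℂ) satisfy Γ_f(conj∘v) = σ·v. Then for every z ∈ ℂ with |z| < 1: σ · Σ_{k=0}^∞ v(k)·z^k = Σ_{j=1}^N a_j · (Σ_{r=0}^∞ conj(v(r))·z_j^r) / (1 − z_j·z). In particular, the Laurent series P_v(z) = Σ_{k=0}^∞ v(k)·z^k is a rational function of z whose numerator is a polynomial of degree at most N−1. -/

import Mathlib

/-- If `σ ≠ 0` and `v ∈ ℓ²` satisfy `Γ_f(conj∘v) = σ·v`, then for every
`z` with `|z| < 1`: `σ·Σ_k v(k)·z^k = Σ_j a_j·(Σ_r conj(v(r))·z_j^r)/(1 − z_j·z)`.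
In particular `P_v` is rational with numerator a polynomial of degree at most `N−1`. -/
theorem stmt_5 (N : ℕ) (hN : 1 ≤ N) (a z : Fin N → ℂ)
    (ha : ∀ j, a j ≠ 0) (hzinj : Function.Injective z)
    (hz : ∀ j, 0 < ‖z j‖ ∧ ‖z j‖ < 1)
    (f : ℕ → ℂ) (hf : ∀ k, f k = ∑ j, a j * z j ^ k)
    (σ : ℂ) (hσ : σ ≠ 0) (v : ℕ → ℂ) (hv : Memℓp v 2)
    (heig : ∀ k : ℕ, ∑' r, f (k + r) * (starRingEnd ℂ) (v r) = σ * v k) :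
    (∀ w : ℂ, ‖w‖ < 1 →
      σ * ∑' k : ℕ, v k * w ^ k =
        ∑ j, a j * (∑' r : ℕ, (starRingEnd ℂ) (v r) * z j ^ r) / (1 - z j * w)) ∧
    ∃ q : Polynomial ℂ, q.natDegree ≤ N - 1 ∧
      ∀ w : ℂ, ‖w‖ < 1 →
        (σ * ∑' k : ℕ, v k * w ^ k) * ∏ j, (1 - z j * w) = q.eval w := by
  classical
  -- v is bounded
  obtain ⟨B, hB⟩ : ∃ B : ℝ, ∀ r, ‖v r‖ ≤ B := by
    have h2 : Summable (fun r => ‖v r‖ ^ (2 : ℝ) : ℕ → ℝ) := hv.summable (by norm_num)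
    have h0 : Filter.Tendsto (fun r => ‖v r‖ ^ (2 : ℝ)) Filter.atTop (nhds 0) :=
      h2.tendsto_atTop_zero
    obtain ⟨C, hC⟩ := h0.bddAbove_range
    refine ⟨max 1 C, fun r => ?_⟩
    have hCr : ‖v r‖ ^ (2 : ℝ) ≤ C := hC ⟨r, rfl⟩
    have : ‖v r‖ ^ (2 : ℝ) = ‖v r‖ ^ 2 := by
      rw [show ((2:ℝ)) = ((2:ℕ):ℝ) by norm_num, Real.rpow_natCast]
    rw [this] at hCr
    rcases le_or_gt ‖v r‖ 1 with h | h
    · exact h.trans (le_max_left _ _)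
    · nlinarith [le_max_right 1 C]
  -- summability helper: for ‖t‖ < 1, (fun r => u r * t ^ r) summable when ‖u r‖ ≤ B
  have hsumm : ∀ (u : ℕ → ℂ) (t : ℂ), (∀ r, ‖u r‖ ≤ B) → ‖t‖ < 1 →
      Summable (fun r : ℕ => u r * t ^ r) := by
    intro u t hu ht
    refine Summable.of_norm_bounded
      ((summable_geometric_of_lt_one (norm_nonneg t) ht).mul_left B) (fun r => ?_)
    rw [norm_mul, norm_pow]
    exact mul_le_mul_of_nonneg_right (hu r) (by positivity)
  have hBconj : ∀ r, ‖(starRingEnd ℂ) (v r)‖ ≤ B := fun r => by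
    rw [RCLike.norm_conj]; exact hB r
  set c : Fin N → ℂ := fun j => ∑' r : ℕ, (starRingEnd ℂ) (v r) * z j ^ r with hc
  -- Step 1
  have step1 : ∀ k : ℕ, σ * v k = ∑ j, (a j * c j) * z j ^ k := by
    intro k
    rw [← heig k]
    have h1 : ∀ r : ℕ, f (k + r) * (starRingEnd ℂ) (v r)
        = ∑ j, (a j * z j ^ k) * ((starRingEnd ℂ) (v r) * z j ^ r) := by
      intro r
      rw [hf, Finset.sum_mul]
      refine Finset.sum_congr rfl (fun j _ => ?_)
      rw [pow_add]; ring
    rw [tsum_congr h1, Summable.tsum_finsetSum (fun j _ => ((hsumm _ _ hBconj (hz j).2).mul_left _))]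
    refine Finset.sum_congr rfl (fun j _ => ?_)
    rw [tsum_mul_left]
    simp only [hc]
    ring
  -- Step 2: the series identity
  have step2 : ∀ w : ℂ, ‖w‖ < 1 →
      σ * ∑' k : ℕ, v k * w ^ k = ∑ j, (a j * c j) / (1 - z j * w) := by
    intro w hw
    have hzw : ∀ j, ‖z j * w‖ < 1 := by
      intro j
      rw [norm_mul]
      nlinarith [(hz j).2, norm_nonneg (z j), norm_nonneg w]
    rw [← tsum_mul_left]
    have h1 : ∀ k : ℕ, σ * (v k * w ^ k) = ∑ j, (a j * c j) * (z j * w) ^ k := by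
      intro k
      rw [← mul_assoc, step1 k, Finset.sum_mul]
      refine Finset.sum_congr rfl (fun j _ => ?_)
      rw [mul_pow]; ring
    rw [tsum_congr h1, Summable.tsum_finsetSum (fun j _ =>
      ((summable_geometric_of_norm_lt_one (hzw j)).mul_left _))]
    refine Finset.sum_congr rfl (fun j _ => ?_)
    rw [tsum_mul_left, tsum_geometric_of_norm_lt_one (hzw j), div_eq_mul_inv]
  constructor
  · exact fun w hw => (step2 w hw).trans (Finset.sum_congr rfl (fun j _ => by
      rw [mul_div_assoc]))
  · refine ⟨∑ j, Polynomial.C (a j * c j) *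
      ∏ i ∈ Finset.univ.erase j, (1 - Polynomial.C (z i) * Polynomial.X), ?_, ?_⟩
    · refine (Polynomial.natDegree_sum_le _ _).trans ?_
      rw [Finset.fold_max_le]
      refine ⟨Nat.zero_le _, fun j _ => ?_⟩
      simp only [Function.comp]
      refine (Polynomial.natDegree_mul_le).trans ?_
      rw [Polynomial.natDegree_C, zero_add]
      refine (Polynomial.natDegree_prod_le _ _).trans ?_
      calc ∑ i ∈ Finset.univ.erase j, (1 - Polynomial.C (z i) * Polynomial.X).natDegree
          ≤ ∑ i ∈ Finset.univ.erase j, 1 := by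
            refine Finset.sum_le_sum (fun i _ => ?_)
            refine (Polynomial.natDegree_sub_le _ _).trans ?_
            simp [Polynomial.natDegree_C_mul_X]
            exact (Polynomial.natDegree_mul_le).trans (by simp)
        _ = N - 1 := by
            rw [Finset.sum_const, smul_eq_mul, mul_one, Finset.card_erase_of_mem
              (Finset.mem_univ j), Finset.card_univ, Fintype.card_fin]
    · intro w hw
      have hzw : ∀ j, ‖z j * w‖ < 1 := by
        intro j
        rw [norm_mul]
        nlinarith [(hz j).2, norm_nonneg (z j), norm_nonneg w]
      have hne : ∀ j, (1 : ℂ) - z j * w ≠ 0 := by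
        intro j h
        have h2 : z j * w = 1 := by linear_combination -h
        have h3 := hzw j
        rw [h2] at h3
        simp at h3
      rw [step2 w hw, Finset.sum_mul]
      simp only [Polynomial.eval_finset_sum, Polynomial.eval_mul, Polynomial.eval_C,
        Polynomial.eval_prod, Polynomial.eval_sub, Polynomial.eval_one, Polynomial.eval_X]
      refine Finset.sum_congr rfl (fun j _ => ?_)
      rw [← Finset.mul_prod_erase Finset.univ _ (Finset.mem_univ j)]
      rw [div_eq_mul_inv, show a j * c j * (1 - z j * w)⁻¹ *
          ((1 - z j * w) * ∏ x ∈ Finset.univ.erase j, (1 - z x * w)) =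
          a j * c j * ((1 - z j * w)⁻¹ * (1 - z j * w)) *
          ∏ x ∈ Finset.univ.erase j, (1 - z x * w) from by ring,
        inv_mul_cancel₀ (hne j), mul_one]
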